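/- Let H = {H_α}_{α∈π} be a finite type involutory Hopf π-coalgebra with dim H_1 ≠ 0 in k. Let (e_i) be a basis of H_1 and define C = Σ_{i,k} δ_i^{i,k} e_k ∈ H_1, where Δ_{1,1}(e_i) = Σ_{j,k} δ_i^{j,k} e_j ⊗ e_k. Then C is a non-zero two-sided integral for the Hopf algebra H_1, S_1(C) = C, and ε(C) = T_1(C) = dim H_1, where T_1(x) = Tr(r(x)). -/

import Mathlib

open TensorProduct

/-- The canonical `k`-linear isomorphism-as-map `H α →ₗ[k] H β` induced by an equality `α = β`. -/
def Lcast (k : Type*) [CommSemiring k] {π : Type*} (H : π → Type*)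
    [∀ α, AddCommMonoid (H α)] [∀ α, Module k (H α)] {α β : π} (h : α = β) :
    H α →ₗ[k] H β := by subst h; exact LinearMap.id

section LcastLemmas

variable (k : Type*) [CommSemiring k] {π : Type*} (H : π → Type*)
    [∀ α, AddCommMonoid (H α)] [∀ α, Module k (H α)]

lemma Lcast_refl {α : π} (h : α = α) : Lcast k H h = LinearMap.id := rfl

lemma Lcast_Lcast {α β γ : π} (h : α = β) (h' : β = γ) (x : H α) :
    Lcast k H h' (Lcast k H h x) = Lcast k H (h.trans h') x := by
  subst h'; subst h; rfl

end LcastLemmas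

section LcastAlg

variable (k : Type*) [CommSemiring k] {π : Type*} (H : π → Type*)
    [∀ α, Ring (H α)] [∀ α, Algebra k (H α)]

lemma Lcast_mul {α β : π} (h : α = β) (x y : H α) :
    Lcast k H h (x * y) = Lcast k H h x * Lcast k H h y := by subst h; rfl

lemma Lcast_one {α β : π} (h : α = β) : Lcast k H h (1 : H α) = 1 := by subst h; rfl

end LcastAlg
/-- A Hopf `π`-coalgebra over a field `k` (Turaev): a family of `k`-algebras `H α`
with comultiplication `Δ α β : H (α * β) →ₐ[k] H α ⊗[k] H β`, counit `ε : H 1 →ₐ[k] k`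
and antipode `S α : H α →ₗ[k] H α⁻¹`, satisfying coassociativity, counit and
antipode axioms. -/
structure HopfGroupCoalgebra (k : Type*) [Field k] (π : Type*) [Group π]
    (H : π → Type*) [∀ α, Ring (H α)] [∀ α, Algebra k (H α)] where
  Δ : ∀ α β : π, H (α * β) →ₐ[k] TensorProduct k (H α) (H β)
  ε : H (1 : π) →ₐ[k] k
  S : ∀ α : π, H α →ₗ[k] H α⁻¹
  coassoc : ∀ (α β γ : π) (x : H (α * β * γ)),
    (TensorProduct.assoc k (H α) (H β) (H γ))
        (TensorProduct.map (Δ α β).toLinearMap LinearMap.id (Δ (α * β) γ x)) =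
      TensorProduct.map LinearMap.id (Δ β γ).toLinearMap
        (Δ α (β * γ) (Lcast k H (mul_assoc α β γ) x))
  counit_right : ∀ (α : π) (x : H (α * 1)),
    (TensorProduct.rid k (H α))
        (TensorProduct.map LinearMap.id ε.toLinearMap (Δ α 1 x)) =
      Lcast k H (mul_one α) x
  counit_left : ∀ (α : π) (x : H (1 * α)),
    (TensorProduct.lid k (H α))
        (TensorProduct.map ε.toLinearMap LinearMap.id (Δ 1 α x)) =
      Lcast k H (one_mul α) x
  antipode_left : ∀ (α : π) (x : H (α⁻¹ * α)),
    (LinearMap.mul' k (H α))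
        (TensorProduct.map ((Lcast k H (inv_inv α)).comp (S α⁻¹)) LinearMap.id (Δ α⁻¹ α x)) =
      ε (Lcast k H (inv_mul_cancel α) x) • (1 : H α)
  antipode_right : ∀ (α : π) (x : H (α * α⁻¹)),
    (LinearMap.mul' k (H α))
        (TensorProduct.map LinearMap.id ((Lcast k H (inv_inv α)).comp (S α⁻¹)) (Δ α α⁻¹ x)) =
      ε (Lcast k H (mul_inv_cancel α) x) • (1 : H α)


section HopfCast

variable {k : Type*} [Field k] {π : Type*} [Group π] {H : π → Type*}
    [∀ α, Ring (H α)] [∀ α, Algebra k (H α)] (Hc : HopfGroupCoalgebra k π H)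

lemma Delta_cast_left {α α' β : π} (hα : α = α') (x : H (α * β)) :
    Hc.Δ α' β (Lcast k H (by rw [hα]) x)
      = TensorProduct.map (Lcast k H hα) LinearMap.id (Hc.Δ α β x) := by
  subst hα
  rw [Lcast_refl, Lcast_refl, TensorProduct.map_id]
  rfl

lemma Delta_cast_right {α β β' : π} (hβ : β = β') (x : H (α * β)) :
    Hc.Δ α β' (Lcast k H (by rw [hβ]) x)
      = TensorProduct.map LinearMap.id (Lcast k H hβ) (Hc.Δ α β x) := by
  subst hβ
  rw [Lcast_refl, Lcast_refl, TensorProduct.map_id]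
  rfl

lemma S_cast {α α' : π} (h : α = α') (x : H α) :
    Hc.S α' (Lcast k H h x) = Lcast k H (by rw [h]) (Hc.S α x) := by
  subst h
  rw [Lcast_refl, Lcast_refl]
  rfl

end HopfCast

open LinearMap Coalgebra

noncomputable section
namespace HopfAux

variable {k A : Type*} [CommRing k] [Ring A] [Bialgebra k A]

set_option maxHeartbeats 1000000 in
lemma ttt_nat {M N P Q M' N' P' Q' : Type*}
    [AddCommMonoid M] [AddCommMonoid N] [AddCommMonoid P] [AddCommMonoid Q]
    [AddCommMonoid M'] [AddCommMonoid N'] [AddCommMonoid P'] [AddCommMonoid Q']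
    [Module k M] [Module k N] [Module k P] [Module k Q]
    [Module k M'] [Module k N'] [Module k P'] [Module k Q']
    (p : M →ₗ[k] M') (q : N →ₗ[k] N') (r : P →ₗ[k] P') (s : Q →ₗ[k] Q') :
    (tensorTensorTensorComm k M' N' P' Q').toLinearMap ∘ₗ map (map p q) (map r s)
      = map (map p r) (map q s) ∘ₗ (tensorTensorTensorComm k M N P Q).toLinearMap := by
  apply TensorProduct.ext_fourfold'
  intro w x y z
  simp only [coe_comp, Function.comp_apply, map_tmul, LinearEquiv.coe_coe,
    tensorTensorTensorComm_tmul]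

set_option maxHeartbeats 1000000 in
set_option synthInstance.maxHeartbeats 400000 in
lemma perm6 :
    (TensorProduct.assoc k (A ⊗[k] A) (A ⊗[k] A) (A ⊗[k] A)).toLinearMap
      ∘ₗ map (tensorTensorTensorComm k A A A A).toLinearMap LinearMap.id
      ∘ₗ (tensorTensorTensorComm k (A ⊗[k] A) A (A ⊗[k] A) A).toLinearMap
      ∘ₗ map (TensorProduct.assoc k A A A).symm.toLinearMap
            (TensorProduct.assoc k A A A).symm.toLinearMap
    = map LinearMap.id (tensorTensorTensorComm k A A A A).toLinearMap
      ∘ₗ (tensorTensorTensorComm k A (A ⊗[k] A) A (A ⊗[k] A)).toLinearMap := by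
  apply TensorProduct.ext'
  intro u v
  induction u using TensorProduct.induction_on with
  | zero => rw [zero_tmul]; simp only [map_zero]
  | add a b ha hb => rw [add_tmul]; simp only [map_add, ha, hb]
  | tmul a u' =>
    induction v using TensorProduct.induction_on with
    | zero => rw [tmul_zero]; simp only [map_zero]
    | add c d hc hd => rw [tmul_add]; simp only [map_add, hc, hd]
    | tmul c v' =>
      induction u' using TensorProduct.induction_on with
      | zero => rw [tmul_zero, zero_tmul]; simp only [map_zero]
      | add e f he hf => rw [tmul_add, add_tmul]; simp only [map_add, he, hf]
      | tmul x y =>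
        induction v' using TensorProduct.induction_on with
        | zero => rw [tmul_zero, tmul_zero]; simp only [map_zero]
        | add e f he hf => rw [tmul_add, tmul_add]; simp only [map_add, he, hf]
        | tmul z w =>
          simp only [coe_comp, Function.comp_apply, map_tmul, LinearEquiv.coe_coe,
            tensorTensorTensorComm_tmul, assoc_symm_tmul, assoc_tmul, id_coe, id_eq]

variable (k A) in
/-- comultiplication on `A ⊗ A`. -/
def Δ₂ : (A ⊗[k] A) →ₗ[k] (A ⊗[k] A) ⊗[k] (A ⊗[k] A) :=
  (tensorTensorTensorComm k A A A A).toLinearMap ∘ₗ map comul comul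

variable (k A) in
/-- counit on `A ⊗ A`. -/
def ε₂ : (A ⊗[k] A) →ₗ[k] k := counit ∘ₗ mul' k A

/-- convolution product on `Hom(A ⊗ A, A)`. -/
def conv2 (f g : (A ⊗[k] A) →ₗ[k] A) : (A ⊗[k] A) →ₗ[k] A :=
  mul' k A ∘ₗ map f g ∘ₗ Δ₂ k A

variable (k A) in
/-- convolution unit on `Hom(A ⊗ A, A)`. -/
def u₂ : (A ⊗[k] A) →ₗ[k] A := Algebra.linearMap k A ∘ₗ ε₂ k A

lemma Δ₂_apply (w : A ⊗[k] A) :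
    Δ₂ k A w = (tensorTensorTensorComm k A A A A) (map comul comul w) := rfl

lemma conv2_apply (f g : (A ⊗[k] A) →ₗ[k] A) (w : A ⊗[k] A) :
    conv2 f g w = mul' k A (map f g (Δ₂ k A w)) := rfl

lemma u₂_apply (w : A ⊗[k] A) : u₂ k A w = ε₂ k A w • 1 := by
  simp [u₂, ε₂, Algebra.algebraMap_eq_smul_one]

-- Claim A for CL1
lemma claimA :
    (ε₂ k A).rTensor (A ⊗[k] A) ∘ₗ (tensorTensorTensorComm k A A A A).toLinearMap
      = ((mul' k k).rTensor (A ⊗[k] A)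
          ∘ₗ (tensorTensorTensorComm k k A k A).toLinearMap)
        ∘ₗ map (counit.rTensor A) (counit.rTensor A) := by
  apply TensorProduct.ext_fourfold'
  intro w x y z
  simp [ε₂, tensorTensorTensorComm_tmul, rTensor_tmul, mul'_apply]

lemma claimB :
    ((mul' k k).rTensor (A ⊗[k] A)
        ∘ₗ (tensorTensorTensorComm k k A k A).toLinearMap)
      ∘ₗ map ((TensorProduct.mk k k A) 1) ((TensorProduct.mk k k A) 1)
    = (TensorProduct.mk k k (A ⊗[k] A)) 1 := by
  apply TensorProduct.ext'
  intro a b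
  simp [tensorTensorTensorComm_tmul, rTensor_tmul, mul'_apply]

/-- left counit law for `Δ₂`. -/
lemma CL1 (w : A ⊗[k] A) : (ε₂ k A).rTensor _ (Δ₂ k A w) = 1 ⊗ₜ[k] w := by
  have h1 := LinearMap.congr_fun (claimA (k := k) (A := A)) (map comul comul w)
  simp only [coe_comp, Function.comp_apply, LinearEquiv.coe_coe] at h1
  rw [Δ₂_apply, h1]
  have h2 : map (counit.rTensor A) (counit.rTensor A) (map comul comul w)
      = map ((TensorProduct.mk k k A) 1) ((TensorProduct.mk k k A) 1) w := by
    rw [← comp_apply, ← TensorProduct.map_comp, Coalgebra.rTensor_counit_comp_comul]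
  rw [h2]
  have h3 := LinearMap.congr_fun (claimB (k := k) (A := A)) w
  simp only [coe_comp, Function.comp_apply, LinearEquiv.coe_coe] at h3
  rw [h3]
  rfl

lemma claimA' :
    (ε₂ k A).lTensor (A ⊗[k] A) ∘ₗ (tensorTensorTensorComm k A A A A).toLinearMap
      = ((mul' k k).lTensor (A ⊗[k] A)
          ∘ₗ (tensorTensorTensorComm k A k A k).toLinearMap)
        ∘ₗ map (counit.lTensor A) (counit.lTensor A) := by
  apply TensorProduct.ext_fourfold'
  intro w x y z
  simp [ε₂, tensorTensorTensorComm_tmul, lTensor_tmul, mul'_apply]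

lemma claimB' :
    ((mul' k k).lTensor (A ⊗[k] A)
        ∘ₗ (tensorTensorTensorComm k A k A k).toLinearMap)
      ∘ₗ map ((TensorProduct.mk k A k).flip 1) ((TensorProduct.mk k A k).flip 1)
    = (TensorProduct.mk k (A ⊗[k] A) k).flip 1 := by
  apply TensorProduct.ext'
  intro a b
  simp [tensorTensorTensorComm_tmul, lTensor_tmul, mul'_apply]

/-- right counit law for `Δ₂`. -/
lemma CL2 (w : A ⊗[k] A) : (ε₂ k A).lTensor _ (Δ₂ k A w) = w ⊗ₜ[k] 1 := by
  have h1 := LinearMap.congr_fun (claimA' (k := k) (A := A)) (map comul comul w)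
  simp only [coe_comp, Function.comp_apply, LinearEquiv.coe_coe] at h1
  rw [Δ₂_apply, h1]
  have h2 : map (counit.lTensor A) (counit.lTensor A) (map comul comul w)
      = map ((TensorProduct.mk k A k).flip 1) ((TensorProduct.mk k A k).flip 1) w := by
    rw [← comp_apply, ← TensorProduct.map_comp, Coalgebra.lTensor_counit_comp_comul]
  rw [h2]
  have h3 := LinearMap.congr_fun (claimB' (k := k) (A := A)) w
  simp only [coe_comp, Function.comp_apply, LinearEquiv.coe_coe] at h3
  rw [h3]
  rfl

end HopfAux

namespace HopfAux
variable {k A : Type*} [CommRing k] [Ring A] [Bialgebra k A]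

set_option maxHeartbeats 1000000 in
/-- coassociativity of `Δ₂`. -/
lemma CL3 (w : A ⊗[k] A) :
    (TensorProduct.assoc k (A ⊗[k] A) (A ⊗[k] A) (A ⊗[k] A))
        ((Δ₂ k A).rTensor _ (Δ₂ k A w))
      = (Δ₂ k A).lTensor _ (Δ₂ k A w) := by
  have e1 : (Δ₂ k A).rTensor (A ⊗[k] A) (Δ₂ k A w)
      = map (tensorTensorTensorComm k A A A A).toLinearMap LinearMap.id
          ((tensorTensorTensorComm k (A ⊗[k] A) A (A ⊗[k] A) A)
            (map (comul.rTensor A ∘ₗ comul) (comul.rTensor A ∘ₗ comul) w)) := by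
    have step : (Δ₂ k A).rTensor (A ⊗[k] A) (Δ₂ k A w)
        = map (tensorTensorTensorComm k A A A A).toLinearMap LinearMap.id
            (map (map comul comul) LinearMap.id
              ((tensorTensorTensorComm k A A A A) (map comul comul w))) := by
      rw [Δ₂_apply]
      rw [show (Δ₂ k A).rTensor (A ⊗[k] A) = map (Δ₂ k A) LinearMap.id from rfl]
      rw [show (Δ₂ k A) = (tensorTensorTensorComm k A A A A).toLinearMap ∘ₗ map comul comul
        from rfl]
      rw [show (LinearMap.id : A ⊗[k] A →ₗ[k] A ⊗[k] A)
        = LinearMap.id ∘ₗ LinearMap.id from rfl]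
      rw [TensorProduct.map_comp]
      rfl
    rw [step]
    congr 1
    have h := LinearMap.congr_fun
      (ttt_nat (k := k) comul (LinearMap.id : A →ₗ[k] A) comul (LinearMap.id : A →ₗ[k] A))
      (map comul comul w)
    simp only [coe_comp, Function.comp_apply, LinearEquiv.coe_coe] at h
    rw [show map (comul.rTensor A ∘ₗ comul) (comul.rTensor A ∘ₗ comul) w
        = map (map comul LinearMap.id) (map comul LinearMap.id) (map comul comul w) by
      rw [← comp_apply, ← TensorProduct.map_comp]; rfl]
    rw [h, TensorProduct.map_id]
  have e2 : (Δ₂ k A).lTensor (A ⊗[k] A) (Δ₂ k A w)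
      = map LinearMap.id (tensorTensorTensorComm k A A A A).toLinearMap
          ((tensorTensorTensorComm k A (A ⊗[k] A) A (A ⊗[k] A))
            (map (comul.lTensor A ∘ₗ comul) (comul.lTensor A ∘ₗ comul) w)) := by
    have step : (Δ₂ k A).lTensor (A ⊗[k] A) (Δ₂ k A w)
        = map LinearMap.id (tensorTensorTensorComm k A A A A).toLinearMap
            (map LinearMap.id (map comul comul)
              ((tensorTensorTensorComm k A A A A) (map comul comul w))) := by
      rw [Δ₂_apply]
      rw [show (Δ₂ k A).lTensor (A ⊗[k] A) = map LinearMap.id (Δ₂ k A) from rfl]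
      rw [show (Δ₂ k A) = (tensorTensorTensorComm k A A A A).toLinearMap ∘ₗ map comul comul
        from rfl]
      rw [show (LinearMap.id : A ⊗[k] A →ₗ[k] A ⊗[k] A)
        = LinearMap.id ∘ₗ LinearMap.id from rfl]
      rw [TensorProduct.map_comp]
      rfl
    rw [step]
    congr 1
    have h := LinearMap.congr_fun
      (ttt_nat (k := k) (LinearMap.id : A →ₗ[k] A) comul (LinearMap.id : A →ₗ[k] A) comul)
      (map comul comul w)
    simp only [coe_comp, Function.comp_apply, LinearEquiv.coe_coe] at h
    rw [show map (comul.lTensor A ∘ₗ comul) (comul.lTensor A ∘ₗ comul) w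
        = map (map LinearMap.id comul) (map LinearMap.id comul) (map comul comul w) by
      rw [← comp_apply, ← TensorProduct.map_comp]; rfl]
    rw [h, TensorProduct.map_id]
  rw [e1, e2]
  rw [show (comul.rTensor A ∘ₗ comul : A →ₗ[k] (A ⊗[k] A) ⊗[k] A)
      = (TensorProduct.assoc k A A A).symm.toLinearMap ∘ₗ (comul.lTensor A ∘ₗ comul) from
    (Coalgebra.coassoc_symm (R := k) (A := A)).symm]
  rw [show map ((TensorProduct.assoc k A A A).symm.toLinearMap ∘ₗ (comul.lTensor A ∘ₗ comul))
        ((TensorProduct.assoc k A A A).symm.toLinearMap ∘ₗ (comul.lTensor A ∘ₗ comul)) w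
      = map (TensorProduct.assoc k A A A).symm.toLinearMap
          (TensorProduct.assoc k A A A).symm.toLinearMap
          (map (comul.lTensor A ∘ₗ comul) (comul.lTensor A ∘ₗ comul) w) by
    rw [← comp_apply, ← TensorProduct.map_comp]]
  have h6 := LinearMap.congr_fun (perm6 (k := k) (A := A))
    (map (comul.lTensor A ∘ₗ comul) (comul.lTensor A ∘ₗ comul) w)
  simp only [coe_comp, Function.comp_apply, LinearEquiv.coe_coe] at h6
  exact h6

end HopfAux

namespace HopfAux
variable {k A : Type*} [CommRing k] [Ring A] [Bialgebra k A]

lemma conv2_unit_left (g : (A ⊗[k] A) →ₗ[k] A) : conv2 (u₂ k A) g = g := by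
  apply LinearMap.ext; intro w
  have : map (u₂ k A) g (Δ₂ k A w)
      = map (Algebra.linearMap k A) g ((ε₂ k A).rTensor _ (Δ₂ k A w)) := by
    rw [← comp_apply (map (Algebra.linearMap k A) g)]
    rw [show map (Algebra.linearMap k A) g ∘ₗ (ε₂ k A).rTensor (A ⊗[k] A)
        = map (u₂ k A) g by
      rw [show (ε₂ k A).rTensor (A ⊗[k] A) = map (ε₂ k A) LinearMap.id from rfl,
        ← TensorProduct.map_comp]
      rfl]
  rw [conv2_apply, this, CL1]
  simp [mul'_apply]

lemma conv2_unit_right (f : (A ⊗[k] A) →ₗ[k] A) : conv2 f (u₂ k A) = f := by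
  apply LinearMap.ext; intro w
  have : map f (u₂ k A) (Δ₂ k A w)
      = map f (Algebra.linearMap k A) ((ε₂ k A).lTensor _ (Δ₂ k A w)) := by
    rw [← comp_apply (map f (Algebra.linearMap k A))]
    rw [show map f (Algebra.linearMap k A) ∘ₗ (ε₂ k A).lTensor (A ⊗[k] A)
        = map f (u₂ k A) by
      rw [show (ε₂ k A).lTensor (A ⊗[k] A) = map LinearMap.id (ε₂ k A) from rfl,
        ← TensorProduct.map_comp]
      rfl]
  rw [conv2_apply, this, CL2]
  simp [mul'_apply]

lemma mul_assoc_map :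
    mul' k A ∘ₗ (mul' k A).rTensor A
      = mul' k A ∘ₗ (mul' k A).lTensor A ∘ₗ (TensorProduct.assoc k A A A).toLinearMap := by
  apply TensorProduct.ext_threefold
  intro x y z
  simp [mul'_apply, mul_assoc]

lemma assoc_nat (f g h : (A ⊗[k] A) →ₗ[k] A) :
    (TensorProduct.assoc k A A A).toLinearMap ∘ₗ map (map f g) h
      = map f (map g h) ∘ₗ (TensorProduct.assoc k (A ⊗[k] A) (A ⊗[k] A) (A ⊗[k] A)).toLinearMap := by
  apply TensorProduct.ext_threefold
  intro x y z
  simp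

set_option maxHeartbeats 800000 in
lemma conv2_assoc (f g h : (A ⊗[k] A) →ₗ[k] A) :
    conv2 (conv2 f g) h = conv2 f (conv2 g h) := by
  apply LinearMap.ext; intro w
  rw [conv2_apply, conv2_apply]
  have lhs1 : map (conv2 f g) h (Δ₂ k A w)
      = map (mul' k A) LinearMap.id
          (map (map f g) h ((Δ₂ k A).rTensor _ (Δ₂ k A w))) := by
    rw [← comp_apply (map (mul' k A) LinearMap.id), ← comp_apply (_ ∘ₗ _)]
    rw [show (map (mul' k A) LinearMap.id ∘ₗ map (map f g) h) ∘ₗ (Δ₂ k A).rTensor (A ⊗[k] A)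
        = map (conv2 f g) h by
      rw [LinearMap.comp_assoc]
      rw [show (Δ₂ k A).rTensor (A ⊗[k] A) = map (Δ₂ k A) LinearMap.id from rfl]
      rw [← TensorProduct.map_comp, ← TensorProduct.map_comp]
      rfl]
  have rhs1 : map f (conv2 g h) (Δ₂ k A w)
      = map LinearMap.id (mul' k A)
          (map f (map g h) ((Δ₂ k A).lTensor _ (Δ₂ k A w))) := by
    rw [← comp_apply (map LinearMap.id (mul' k A)), ← comp_apply (_ ∘ₗ _)]
    rw [show (map LinearMap.id (mul' k A) ∘ₗ map f (map g h)) ∘ₗ (Δ₂ k A).lTensor (A ⊗[k] A)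
        = map f (conv2 g h) by
      rw [LinearMap.comp_assoc]
      rw [show (Δ₂ k A).lTensor (A ⊗[k] A) = map LinearMap.id (Δ₂ k A) from rfl]
      rw [← TensorProduct.map_comp, ← TensorProduct.map_comp]
      rfl]
  rw [lhs1, rhs1, ← CL3]
  have h2 := LinearMap.congr_fun (assoc_nat f g h) ((Δ₂ k A).rTensor _ (Δ₂ k A w))
  simp only [coe_comp, Function.comp_apply, LinearEquiv.coe_coe] at h2
  rw [← h2]
  have h3 := LinearMap.congr_fun (mul_assoc_map (k := k) (A := A))
    (map (map f g) h ((Δ₂ k A).rTensor _ (Δ₂ k A w)))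
  simp only [coe_comp, Function.comp_apply, LinearEquiv.coe_coe] at h3
  rw [show map (mul' k A) (LinearMap.id : A →ₗ[k] A) = (mul' k A).rTensor A from rfl, h3]
  rfl

lemma conv2_unique {F M G : (A ⊗[k] A) →ₗ[k] A}
    (h1 : conv2 F M = u₂ k A) (h2 : conv2 M G = u₂ k A) : F = G := by
  have := conv2_assoc F M G
  rw [h1, h2, conv2_unit_left, conv2_unit_right] at this
  exact this.symm

end HopfAux

namespace HopfAux
variable {k A : Type*} [CommRing k] [Ring A] [Bialgebra k A]

lemma repr_antipode_left (S : A →ₗ[k] A)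
    (hSl : ∀ x : A, mul' k A (S.rTensor A (comul x)) = counit (R := k) x • 1)
    {x : A} (r : Coalgebra.Repr k x (A × A)) :
    ∑ i ∈ r.index, S (r.left i) * r.right i = counit (R := k) x • 1 := by
  have h := hSl x
  rw [← r.eq] at h
  simpa [map_sum, rTensor_tmul, mul'_apply] using h

lemma repr_antipode_right (S : A →ₗ[k] A)
    (hSr : ∀ x : A, mul' k A (S.lTensor A (comul x)) = counit (R := k) x • 1)
    {x : A} (r : Coalgebra.Repr k x (A × A)) :
    ∑ i ∈ r.index, r.left i * S (r.right i) = counit (R := k) x • 1 := by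
  have h := hSr x
  rw [← r.eq] at h
  simpa [map_sum, lTensor_tmul, mul'_apply] using h

lemma repr_counit_left {x : A} (r : Coalgebra.Repr k x (A × A)) :
    ∑ i ∈ r.index, counit (R := k) (r.right i) • r.left i = x := by
  have h := Coalgebra.sum_tmul_counit_eq (R := k) r
  calc ∑ i ∈ r.index, counit (R := k) (r.right i) • r.left i
      = (TensorProduct.rid k A) (∑ i ∈ r.index, r.left i ⊗ₜ[k] counit (R := k) (r.right i)) := by
        rw [map_sum]
        exact Finset.sum_congr rfl fun i _ => (TensorProduct.rid_tmul _ _).symm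
    _ = x := by rw [h]; simp

lemma mulT_ttt :
    map (mul' k A) (mul' k A) ∘ₗ (tensorTensorTensorComm k A A A A).toLinearMap
      = mul' k (A ⊗[k] A) := by
  apply TensorProduct.ext_fourfold'
  intro w x y z
  simp [tensorTensorTensorComm_tmul, mul'_apply, Algebra.TensorProduct.tmul_mul_tmul]

lemma mulT_comul :
    mul' k (A ⊗[k] A) ∘ₗ map comul comul = comul ∘ₗ mul' k A := by
  apply TensorProduct.ext'
  intro a b
  simp [mul'_apply]

lemma map_mul_mul_Δ₂ (w : A ⊗[k] A) :
    map (mul' k A) (mul' k A) (Δ₂ k A w) = comul (mul' k A w) := by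
  rw [Δ₂_apply]
  have h1 := LinearMap.congr_fun (mulT_ttt (k := k) (A := A)) (map comul comul w)
  simp only [coe_comp, Function.comp_apply, LinearEquiv.coe_coe] at h1
  rw [h1]
  have h2 := LinearMap.congr_fun (mulT_comul (k := k) (A := A)) w
  simpa only [coe_comp, Function.comp_apply] using h2

lemma FM (S : A →ₗ[k] A)
    (hSl : ∀ x : A, mul' k A (S.rTensor A (comul x)) = counit (R := k) x • 1) :
    conv2 (S ∘ₗ mul' k A) (mul' k A) = u₂ k A := by
  apply LinearMap.ext; intro w
  rw [conv2_apply]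
  have : map (S ∘ₗ mul' k A) (mul' k A) (Δ₂ k A w)
      = S.rTensor A (map (mul' k A) (mul' k A) (Δ₂ k A w)) := by
    rw [← comp_apply (S.rTensor A)]
    rw [show S.rTensor A ∘ₗ map (mul' k A) (mul' k A) = map (S ∘ₗ mul' k A) (mul' k A) by
      rw [show S.rTensor A = map S LinearMap.id from rfl, ← TensorProduct.map_comp]; rfl]
  rw [this, map_mul_mul_Δ₂, hSl, u₂_apply]
  rfl

lemma MG (S : A →ₗ[k] A)
    (hSr : ∀ x : A, mul' k A (S.lTensor A (comul x)) = counit (R := k) x • 1) :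
    conv2 (mul' k A)
      (mul' k A ∘ₗ map S S ∘ₗ (TensorProduct.comm k A A).toLinearMap) = u₂ k A := by
  apply TensorProduct.ext'
  intro a b
  set ra := ℛ k a with hra
  set rb := ℛ k b with hrb
  have expand : Δ₂ k A (a ⊗ₜ[k] b)
      = ∑ i ∈ ra.index, ∑ j ∈ rb.index,
          (ra.left i ⊗ₜ[k] rb.left j) ⊗ₜ[k] (ra.right i ⊗ₜ[k] rb.right j) := by
    rw [Δ₂_apply]
    have h0 : map comul comul (a ⊗ₜ[k] b) = comul a ⊗ₜ[k] comul b := by simp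
    rw [h0, ← ra.eq, ← rb.eq, sum_tmul]
    rw [map_sum]
    refine Finset.sum_congr rfl ?_
    intro i _
    rw [tmul_sum, map_sum]
    refine Finset.sum_congr rfl ?_
    intro j _
    exact tensorTensorTensorComm_tmul ..
  rw [conv2_apply, expand]
  simp only [map_sum]
  have term : ∀ i ∈ ra.index, ∀ j ∈ rb.index,
      mul' k A (map (mul' k A)
          (mul' k A ∘ₗ map S S ∘ₗ (TensorProduct.comm k A A).toLinearMap)
          ((ra.left i ⊗ₜ[k] rb.left j) ⊗ₜ[k] (ra.right i ⊗ₜ[k] rb.right j)))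
      = ra.left i * ((rb.left j * S (rb.right j)) * S (ra.right i)) := by
    intro i _ j _
    simp only [map_tmul, coe_comp, Function.comp_apply, LinearEquiv.coe_coe, comm_tmul,
      mul'_apply]
    rw [mul_assoc, ← mul_assoc (rb.left j)]
  calc (∑ i ∈ ra.index, ∑ j ∈ rb.index, mul' k A (map (mul' k A)
          (mul' k A ∘ₗ map S S ∘ₗ (TensorProduct.comm k A A).toLinearMap)
          ((ra.left i ⊗ₜ[k] rb.left j) ⊗ₜ[k] (ra.right i ⊗ₜ[k] rb.right j))))
      = ∑ i ∈ ra.index, ra.left i * ((∑ j ∈ rb.index, rb.left j * S (rb.right j)) * S (ra.right i)) := by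
        refine Finset.sum_congr rfl ?_
        intro i hi
        rw [Finset.sum_mul, Finset.mul_sum]
        exact Finset.sum_congr rfl fun j hj => term i hi j hj
    _ = counit (R := k) b • ∑ i ∈ ra.index, ra.left i * S (ra.right i) := by
        rw [repr_antipode_right S hSr rb, Finset.smul_sum]
        refine Finset.sum_congr rfl ?_
        intro i _
        rw [smul_mul_assoc, one_mul, mul_smul_comm]
    _ = u₂ k A (a ⊗ₜ[k] b) := by
        rw [repr_antipode_right S hSr ra, u₂_apply]
        rw [smul_smul]
        have : ε₂ k A (a ⊗ₜ[k] b) = counit (R := k) a * counit (R := k) b := by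
          simp [ε₂, mul'_apply]
        rw [this, mul_comm]

lemma S_mul (S : A →ₗ[k] A)
    (hSl : ∀ x : A, mul' k A (S.rTensor A (comul x)) = counit (R := k) x • 1)
    (hSr : ∀ x : A, mul' k A (S.lTensor A (comul x)) = counit (R := k) x • 1)
    (a b : A) : S (a * b) = S b * S a := by
  have h := conv2_unique (FM S hSl) (MG S hSr)
  have := LinearMap.congr_fun h (a ⊗ₜ[k] b)
  simpa [mul'_apply] using this

lemma S_one (S : A →ₗ[k] A)
    (hSl : ∀ x : A, mul' k A (S.rTensor A (comul x)) = counit (R := k) x • 1) :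
    S 1 = 1 := by
  have h := hSl 1
  rw [Bialgebra.comul_one, Algebra.TensorProduct.one_def] at h
  simpa [mul'_apply] using h

lemma counit_S (S : A →ₗ[k] A)
    (hSl : ∀ x : A, mul' k A (S.rTensor A (comul x)) = counit (R := k) x • 1)
    (x : A) : counit (R := k) (S x) = counit (R := k) x := by
  set r := ℛ k x with hr
  have h1 : ∑ i ∈ r.index, S (r.left i) * r.right i = counit (R := k) x • 1 :=
    repr_antipode_left S hSl r
  have h2 := congrArg (counit (R := k)) h1
  simp only [map_sum, Bialgebra.counit_mul, map_smul, Bialgebra.counit_one, smul_eq_mul,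
    mul_one] at h2
  calc counit (R := k) (S x)
      = counit (R := k) (S (∑ i ∈ r.index, counit (R := k) (r.right i) • r.left i)) := by
        rw [repr_counit_left r]
    _ = ∑ i ∈ r.index, counit (R := k) (S (r.left i)) * counit (R := k) (r.right i) := by
        rw [map_sum, map_sum]
        refine Finset.sum_congr rfl ?_
        intro i _
        rw [map_smul, map_smul, smul_eq_mul, mul_comm]
    _ = counit (R := k) x := h2

lemma C1 (S : A →ₗ[k] A)
    (hSl : ∀ x : A, mul' k A (S.rTensor A (comul x)) = counit (R := k) x • 1)
    (hSr : ∀ x : A, mul' k A (S.lTensor A (comul x)) = counit (R := k) x • 1)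
    (hSS : ∀ x : A, S (S x) = x)
    {x : A} (r : Coalgebra.Repr k x (A × A)) :
    ∑ i ∈ r.index, r.right i * S (r.left i) = counit (R := k) x • 1 := by
  have step : ∀ i ∈ r.index, r.right i * S (r.left i) = S (r.left i * S (r.right i)) := by
    intro i _
    rw [S_mul S hSl hSr, hSS]
  calc ∑ i ∈ r.index, r.right i * S (r.left i)
      = S (∑ i ∈ r.index, r.left i * S (r.right i)) := by
        rw [map_sum]; exact Finset.sum_congr rfl step
    _ = counit (R := k) x • 1 := by
        rw [repr_antipode_right S hSr r, map_smul, S_one S hSl]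

end HopfAux

namespace HopfAux
variable {k A : Type*} [CommRing k] [Ring A] [Bialgebra k A]

/-- `a ↦ S a ⊗ 1`. -/
def ρS (S : A →ₗ[k] A) : A →ₗ[k] A ⊗[k] A := ((TensorProduct.mk k A A).flip 1) ∘ₗ S

lemma ρS_apply (S : A →ₗ[k] A) (a : A) : ρS S a = S a ⊗ₜ[k] 1 := rfl

/-- `a ⊗ c ↦ (S a ⊗ 1) * comul c`. -/
def Ψ (S : A →ₗ[k] A) : A ⊗[k] A →ₗ[k] A ⊗[k] A :=
  mul' k (A ⊗[k] A) ∘ₗ map (ρS S) comul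

lemma Ψ_tmul (S : A →ₗ[k] A) (a c : A) :
    Ψ S (a ⊗ₜ[k] c) = (S a ⊗ₜ[k] 1) * comul c := by
  simp [Ψ, ρS_apply, mul'_apply]

lemma E1a (S : A →ₗ[k] A) :
    mul' k (A ⊗[k] A) ∘ₗ map (ρS S) LinearMap.id
        ∘ₗ (TensorProduct.assoc k A A A).toLinearMap
      = map (mul' k A ∘ₗ S.rTensor A) LinearMap.id := by
  apply TensorProduct.ext_threefold
  intro x y z
  simp [ρS_apply, mul'_apply, Algebra.TensorProduct.tmul_mul_tmul]

lemma hSl_comp (S : A →ₗ[k] A)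
    (hSl : ∀ x : A, mul' k A (S.rTensor A (comul x)) = counit (R := k) x • 1) :
    mul' k A ∘ₗ S.rTensor A ∘ₗ comul = Algebra.linearMap k A ∘ₗ counit := by
  apply LinearMap.ext; intro x
  simp [hSl x, Algebra.algebraMap_eq_smul_one]

lemma map_counit_unit_comul (x : A) :
    map (Algebra.linearMap k A ∘ₗ counit) LinearMap.id (comul x) = (1 : A) ⊗ₜ[k] x := by
  have : map (Algebra.linearMap k A ∘ₗ counit) LinearMap.id (comul x)
      = (Algebra.linearMap k A).rTensor A (counit.rTensor A (comul x)) := by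
    rw [← comp_apply ((Algebra.linearMap k A).rTensor A)]
    rw [show (Algebra.linearMap k A).rTensor A ∘ₗ counit.rTensor A
        = map (Algebra.linearMap k A ∘ₗ counit) LinearMap.id by
      rw [show (Algebra.linearMap k A).rTensor A = map (Algebra.linearMap k A) LinearMap.id
        from rfl, show counit.rTensor A = map (counit (R := k) (A := A)) LinearMap.id from rfl,
        ← TensorProduct.map_comp]
      rfl]
  rw [this, Coalgebra.rTensor_counit_comul]
  simp

lemma E1 (S : A →ₗ[k] A)
    (hSl : ∀ x : A, mul' k A (S.rTensor A (comul x)) = counit (R := k) x • 1)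
    (x : A) : Ψ S (comul x) = (1 : A) ⊗ₜ[k] x := by
  have e0 : Ψ S (comul x)
      = mul' k (A ⊗[k] A) (map (ρS S) LinearMap.id (comul.lTensor A (comul x))) := by
    rw [Ψ, comp_apply]
    congr 1
    rw [← comp_apply (map (ρS S) LinearMap.id)]
    rw [show map (ρS S) LinearMap.id ∘ₗ comul.lTensor A = map (ρS S) comul by
      rw [show comul.lTensor A = map LinearMap.id (comul (R := k) (A := A)) from rfl,
        ← TensorProduct.map_comp]
      rfl]
  rw [e0, ← Coalgebra.coassoc_apply]
  have e1 := LinearMap.congr_fun (E1a S) (comul.rTensor A (comul x))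
  simp only [coe_comp, Function.comp_apply, LinearEquiv.coe_coe] at e1
  rw [e1]
  have e2 : map (mul' k A ∘ₗ S.rTensor A) LinearMap.id (comul.rTensor A (comul x))
      = map (mul' k A ∘ₗ S.rTensor A ∘ₗ comul) LinearMap.id (comul x) := by
    rw [← comp_apply (map (mul' k A ∘ₗ S.rTensor A) LinearMap.id)]
    rw [show map (mul' k A ∘ₗ S.rTensor A) LinearMap.id ∘ₗ comul.rTensor A
        = map (mul' k A ∘ₗ S.rTensor A ∘ₗ comul) LinearMap.id by
      rw [show comul.rTensor A = map (comul (R := k) (A := A)) LinearMap.id from rfl,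
        ← TensorProduct.map_comp]
      simp [LinearMap.comp_assoc]]
  rw [e2, hSl_comp S hSl, map_counit_unit_comul]

/-- `a ⊗ c ↦ c * S a`. -/
def nmap (S : A →ₗ[k] A) : A ⊗[k] A →ₗ[k] A :=
  mul' k A ∘ₗ (TensorProduct.comm k A A).toLinearMap ∘ₗ S.rTensor A

lemma nmap_tmul (S : A →ₗ[k] A) (a c : A) : nmap S (a ⊗ₜ[k] c) = c * S a := by
  simp [nmap, mul'_apply]

lemma nmap_comul (S : A →ₗ[k] A)
    (hSl : ∀ x : A, mul' k A (S.rTensor A (comul x)) = counit (R := k) x • 1)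
    (hSr : ∀ x : A, mul' k A (S.lTensor A (comul x)) = counit (R := k) x • 1)
    (hSS : ∀ x : A, S (S x) = x)
    (x : A) : nmap S (comul x) = counit (R := k) x • 1 := by
  have hr := (ℛ k x).eq
  rw [← hr, map_sum]
  have := C1 S hSl hSr hSS (ℛ k x)
  calc ∑ i ∈ (ℛ k x).index, nmap S ((ℛ k x).left i ⊗ₜ[k] (ℛ k x).right i)
      = ∑ i ∈ (ℛ k x).index, (ℛ k x).right i * S ((ℛ k x).left i) := by
        exact Finset.sum_congr rfl fun i _ => nmap_tmul S _ _
    _ = counit (R := k) x • 1 := this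

lemma nmap_comp_comul (S : A →ₗ[k] A)
    (hSl : ∀ x : A, mul' k A (S.rTensor A (comul x)) = counit (R := k) x • 1)
    (hSr : ∀ x : A, mul' k A (S.lTensor A (comul x)) = counit (R := k) x • 1)
    (hSS : ∀ x : A, S (S x) = x) :
    nmap S ∘ₗ comul = Algebra.linearMap k A ∘ₗ counit := by
  apply LinearMap.ext; intro x
  simp [nmap_comul S hSl hSr hSS x, Algebra.algebraMap_eq_smul_one]

/-- `a ⊗ c ↦ comul c * (S a ⊗ 1)`. -/
def Ψ' (S : A →ₗ[k] A) : A ⊗[k] A →ₗ[k] A ⊗[k] A :=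
  map (nmap S) LinearMap.id ∘ₗ (TensorProduct.assoc k A A A).symm.toLinearMap
    ∘ₗ comul.lTensor A

set_option synthInstance.maxHeartbeats 400000 in
set_option maxHeartbeats 800000 in
lemma T3 (S : A →ₗ[k] A) (a : A) (v : A ⊗[k] A) :
    map (nmap S) LinearMap.id ((TensorProduct.assoc k A A A).symm (a ⊗ₜ[k] v))
      = v * (S a ⊗ₜ[k] 1) := by
  induction v using TensorProduct.induction_on with
  | zero => simp
  | add u w hu hw => rw [tmul_add, map_add, map_add, hu, hw, add_mul]
  | tmul p q =>
    simp [assoc_symm_tmul, nmap_tmul, Algebra.TensorProduct.tmul_mul_tmul]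

lemma Ψ'_tmul (S : A →ₗ[k] A) (a c : A) :
    Ψ' S (a ⊗ₜ[k] c) = comul c * (S a ⊗ₜ[k] 1) := by
  rw [Ψ', comp_apply, comp_apply]
  rw [show comul.lTensor A (a ⊗ₜ[k] c) = a ⊗ₜ[k] comul c from rfl]
  exact T3 S a (comul c)

lemma E2 (S : A →ₗ[k] A)
    (hSl : ∀ x : A, mul' k A (S.rTensor A (comul x)) = counit (R := k) x • 1)
    (hSr : ∀ x : A, mul' k A (S.lTensor A (comul x)) = counit (R := k) x • 1)
    (hSS : ∀ x : A, S (S x) = x)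
    (x : A) : Ψ' S (comul x) = (1 : A) ⊗ₜ[k] x := by
  rw [Ψ', comp_apply, comp_apply]
  rw [← Coalgebra.coassoc_apply, LinearEquiv.coe_coe, LinearEquiv.symm_apply_apply]
  have e2 : map (nmap S) LinearMap.id (comul.rTensor A (comul x))
      = map (nmap S ∘ₗ comul) LinearMap.id (comul x) := by
    rw [← comp_apply (map (nmap S) LinearMap.id)]
    rw [show map (nmap S) LinearMap.id ∘ₗ comul.rTensor A
        = map (nmap S ∘ₗ comul) LinearMap.id by
      rw [show comul.rTensor A = map (comul (R := k) (A := A)) LinearMap.id from rfl,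
        ← TensorProduct.map_comp]
      rfl]
  rw [e2, nmap_comp_comul S hSl hSr hSS, map_counit_unit_comul]

end HopfAux

namespace HopfAux
variable {k A : Type*} [CommRing k] [Ring A] [Bialgebra k A]

set_option synthInstance.maxHeartbeats 400000
set_option maxHeartbeats 1000000

/-- partial evaluation of `comul` against a functional on the second leg. -/
def Pd (f : A →ₗ[k] k) : A →ₗ[k] A :=
  (TensorProduct.rid k A).toLinearMap ∘ₗ f.lTensor A ∘ₗ comul

lemma Pd_apply (f : A →ₗ[k] k) (y : A) :
    Pd f y = (TensorProduct.rid k A) (f.lTensor A (comul y)) := rfl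

/-- `a ⊗ c ↦ (z ↦ S a * Pd f (c * z))`. -/
def Phi (S : A →ₗ[k] A) (f : A →ₗ[k] k) : A ⊗[k] A →ₗ[k] (A →ₗ[k] A) :=
  TensorProduct.lift <| LinearMap.mk₂ k
    (fun a c => LinearMap.mul k A (S a) ∘ₗ Pd f ∘ₗ LinearMap.mul k A c)
    (fun a a' c => by ext y; simp [add_mul])
    (fun t a c => by ext y; simp [smul_mul_assoc])
    (fun a c c' => by ext y; simp [add_mul, mul_add])
    (fun t a c => by ext y; simp [smul_mul_assoc, mul_smul_comm])

lemma Phi_tmul (S : A →ₗ[k] A) (f : A →ₗ[k] k) (a c y : A) :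
    Phi S f (a ⊗ₜ[k] c) y = S a * Pd f (c * y) := by
  simp [Phi, LinearMap.mul_apply']

lemma T1 (f : A →ₗ[k] k) (x : A) (u : A ⊗[k] A) :
    (TensorProduct.rid k A) ((f ∘ₗ LinearMap.mul k A x).lTensor A u)
      = (TensorProduct.rid k A) (f.lTensor A (((1 : A) ⊗ₜ[k] x) * u)) := by
  induction u using TensorProduct.induction_on with
  | zero => simp
  | add u v hu hv => rw [mul_add, map_add, map_add, map_add, map_add, hu, hv]
  | tmul p q => simp [Algebra.TensorProduct.tmul_mul_tmul, LinearMap.mul_apply']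

lemma T2 (f : A →ₗ[k] k) (a : A) (v : A ⊗[k] A) :
    (TensorProduct.rid k A) (f.lTensor A ((a ⊗ₜ[k] (1:A)) * v))
      = a * (TensorProduct.rid k A) (f.lTensor A v) := by
  induction v using TensorProduct.induction_on with
  | zero => simp
  | add u w hu hw => rw [mul_add, map_add, map_add, hu, hw, ← mul_add, ← map_add, ← map_add]
  | tmul p q => simp [Algebra.TensorProduct.tmul_mul_tmul, mul_smul_comm]

lemma keyStep1 (S : A →ₗ[k] A)
    (hSl : ∀ x : A, mul' k A (S.rTensor A (comul x)) = counit (R := k) x • 1)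
    (f : A →ₗ[k] k) (x : A) :
    Pd (f ∘ₗ LinearMap.mul k A x) = Phi S f (comul x) := by
  have step3 : ∀ (w : A ⊗[k] A) (y : A),
      Phi S f w y = (TensorProduct.rid k A) (f.lTensor A (Ψ S w * comul y)) := by
    intro w y
    induction w using TensorProduct.induction_on with
    | zero => simp
    | add u v hu hv =>
      rw [map_add, LinearMap.add_apply, hu, hv, map_add, add_mul, map_add, map_add]
    | tmul a c =>
      rw [Phi_tmul, Ψ_tmul, mul_assoc, ← Bialgebra.comul_mul]
      rw [T2 f (S a) (comul (c * y))]
      rfl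
  apply LinearMap.ext; intro y
  rw [Pd_apply, T1 f x (comul y), ← E1 S hSl x, ← step3 (comul x) y]

/-- trace against `Pd f` of left multiplications. -/
def lamf (f : A →ₗ[k] k) : A →ₗ[k] k :=
  LinearMap.trace k A ∘ₗ LinearMap.llcomp k A A A (Pd f) ∘ₗ LinearMap.mul k A

lemma lamf_apply (f : A →ₗ[k] k) (c : A) :
    lamf f c = LinearMap.trace k A (Pd f ∘ₗ LinearMap.mul k A c) := rfl

variable [Module.Free k A] [Module.Finite k A]

lemma trace_Phi (S : A →ₗ[k] A) (f : A →ₗ[k] k) :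
    LinearMap.trace k A ∘ₗ Phi S f = lamf f ∘ₗ nmap S := by
  apply TensorProduct.ext'
  intro a c
  simp only [coe_comp, Function.comp_apply, nmap_tmul, lamf_apply]
  have h1 : Phi S f (a ⊗ₜ[k] c) = LinearMap.mul k A (S a) ∘ₗ (Pd f ∘ₗ LinearMap.mul k A c) := by
    apply LinearMap.ext; intro y; rw [Phi_tmul]; rfl
  rw [h1, LinearMap.trace_comp_comm']
  congr 1
  apply LinearMap.ext; intro y
  simp [LinearMap.mul_apply', mul_assoc]

lemma keyxC (S : A →ₗ[k] A)
    (hSl : ∀ x : A, mul' k A (S.rTensor A (comul x)) = counit (R := k) x • 1)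
    (hSr : ∀ x : A, mul' k A (S.lTensor A (comul x)) = counit (R := k) x • 1)
    (hSS : ∀ x : A, S (S x) = x)
    (f : A →ₗ[k] k) (x : A) :
    LinearMap.trace k A (Pd (f ∘ₗ LinearMap.mul k A x))
      = counit (R := k) x * LinearMap.trace k A (Pd f) := by
  rw [keyStep1 S hSl f x]
  have := LinearMap.congr_fun (trace_Phi S f) (comul x)
  simp only [coe_comp, Function.comp_apply] at this
  rw [this, nmap_comul S hSl hSr hSS x, map_smul, smul_eq_mul]
  congr 1
  rw [lamf_apply]
  congr 1
  apply LinearMap.ext; intro y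
  simp [LinearMap.mul_apply']

end HopfAux

namespace HopfAux
variable {k A : Type*} [CommRing k] [Ring A] [Bialgebra k A]

set_option synthInstance.maxHeartbeats 400000
set_option maxHeartbeats 1000000

/-- `a ⊗ c ↦ (z ↦ Pd f (z * c) * S a)`. -/
def Phi' (S : A →ₗ[k] A) (f : A →ₗ[k] k) : A ⊗[k] A →ₗ[k] (A →ₗ[k] A) :=
  TensorProduct.lift <| LinearMap.mk₂ k
    (fun a c => (LinearMap.mul k A).flip (S a) ∘ₗ Pd f ∘ₗ (LinearMap.mul k A).flip c)
    (fun a a' c => by ext y; simp [mul_add])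
    (fun t a c => by ext y; simp [mul_smul_comm])
    (fun a c c' => by ext y; simp [mul_add])
    (fun t a c => by ext y; simp [mul_smul_comm, smul_mul_assoc])

lemma Phi'_tmul (S : A →ₗ[k] A) (f : A →ₗ[k] k) (a c y : A) :
    Phi' S f (a ⊗ₜ[k] c) y = Pd f (y * c) * S a := by
  simp [Phi']

lemma T1' (f : A →ₗ[k] k) (x : A) (u : A ⊗[k] A) :
    (TensorProduct.rid k A) ((f ∘ₗ (LinearMap.mul k A).flip x).lTensor A u)
      = (TensorProduct.rid k A) (f.lTensor A (u * ((1 : A) ⊗ₜ[k] x))) := by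
  induction u using TensorProduct.induction_on with
  | zero => simp
  | add u v hu hv => rw [add_mul, map_add, map_add, map_add, map_add, hu, hv]
  | tmul p q => simp [Algebra.TensorProduct.tmul_mul_tmul]

lemma T2' (f : A →ₗ[k] k) (a : A) (v : A ⊗[k] A) :
    (TensorProduct.rid k A) (f.lTensor A (v * (a ⊗ₜ[k] (1:A))))
      = (TensorProduct.rid k A) (f.lTensor A v) * a := by
  induction v using TensorProduct.induction_on with
  | zero => simp
  | add u w hu hw => rw [add_mul, map_add, map_add, hu, hw, ← add_mul, ← map_add, ← map_add]
  | tmul p q => simp [Algebra.TensorProduct.tmul_mul_tmul, smul_mul_assoc]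

lemma keyStep1' (S : A →ₗ[k] A)
    (hSl : ∀ x : A, mul' k A (S.rTensor A (comul x)) = counit (R := k) x • 1)
    (hSr : ∀ x : A, mul' k A (S.lTensor A (comul x)) = counit (R := k) x • 1)
    (hSS : ∀ x : A, S (S x) = x)
    (f : A →ₗ[k] k) (x : A) :
    Pd (f ∘ₗ (LinearMap.mul k A).flip x) = Phi' S f (comul x) := by
  have step3 : ∀ (w : A ⊗[k] A) (y : A),
      Phi' S f w y = (TensorProduct.rid k A) (f.lTensor A (comul y * Ψ' S w)) := by
    intro w y
    induction w using TensorProduct.induction_on with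
    | zero => simp
    | add u v hu hv =>
      rw [map_add, LinearMap.add_apply, hu, hv, map_add, mul_add, map_add, map_add]
    | tmul a c =>
      rw [Phi'_tmul, Ψ'_tmul, ← mul_assoc, ← Bialgebra.comul_mul]
      rw [T2' f (S a) (comul (y * c))]
      rfl
  apply LinearMap.ext; intro y
  rw [Pd_apply, T1' f x (comul y), ← E2 S hSl hSr hSS x, ← step3 (comul x) y]

/-- trace against `Pd f` of right multiplications. -/
def lamf' (f : A →ₗ[k] k) : A →ₗ[k] k :=
  LinearMap.trace k A ∘ₗ LinearMap.llcomp k A A A (Pd f) ∘ₗ (LinearMap.mul k A).flip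

lemma lamf'_apply (f : A →ₗ[k] k) (c : A) :
    lamf' f c = LinearMap.trace k A (Pd f ∘ₗ (LinearMap.mul k A).flip c) := rfl

variable [Module.Free k A] [Module.Finite k A]

lemma trace_Phi' (S : A →ₗ[k] A) (f : A →ₗ[k] k) :
    LinearMap.trace k A ∘ₗ Phi' S f
      = lamf' f ∘ₗ (mul' k A ∘ₗ S.rTensor A) := by
  apply TensorProduct.ext'
  intro a c
  simp only [coe_comp, Function.comp_apply, lamf'_apply, rTensor_tmul, mul'_apply]
  have h1 : Phi' S f (a ⊗ₜ[k] c)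
      = (LinearMap.mul k A).flip (S a) ∘ₗ (Pd f ∘ₗ (LinearMap.mul k A).flip c) := by
    apply LinearMap.ext; intro y; rw [Phi'_tmul]; rfl
  rw [h1, LinearMap.trace_comp_comm']
  congr 1
  apply LinearMap.ext; intro y
  simp [mul_assoc]

lemma keyCx (S : A →ₗ[k] A)
    (hSl : ∀ x : A, mul' k A (S.rTensor A (comul x)) = counit (R := k) x • 1)
    (hSr : ∀ x : A, mul' k A (S.lTensor A (comul x)) = counit (R := k) x • 1)
    (hSS : ∀ x : A, S (S x) = x)
    (f : A →ₗ[k] k) (x : A) :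
    LinearMap.trace k A (Pd (f ∘ₗ (LinearMap.mul k A).flip x))
      = counit (R := k) x * LinearMap.trace k A (Pd f) := by
  rw [keyStep1' S hSl hSr hSS f x]
  have := LinearMap.congr_fun (trace_Phi' S f) (comul x)
  simp only [coe_comp, Function.comp_apply] at this
  rw [this, hSl x, map_smul, smul_eq_mul]
  congr 1
  rw [lamf'_apply]
  congr 1
  apply LinearMap.ext; intro y
  simp

end HopfAux

namespace HopfAux
variable {k A : Type*} [CommRing k] [Ring A] [Bialgebra k A]

set_option synthInstance.maxHeartbeats 400000
set_option maxHeartbeats 1000000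

lemma LT0 (g f : A →ₗ[k] k) (u : A ⊗[k] A) :
    f ((TensorProduct.lid k A) (map g LinearMap.id u))
      = g ((TensorProduct.rid k A) (f.lTensor A u)) := by
  induction u using TensorProduct.induction_on with
  | zero => simp
  | add u v hu hv => rw [map_add, map_add, map_add, map_add, map_add, hu, hv, ← map_add]
  | tmul p q => simp [mul_comm]

lemma LT2 (g f : A →ₗ[k] k) (x : A) (u : A ⊗[k] A) :
    f (x * (TensorProduct.lid k A) (map g LinearMap.id u))
      = g ((TensorProduct.rid k A) ((f ∘ₗ LinearMap.mul k A x).lTensor A u)) := by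
  induction u using TensorProduct.induction_on with
  | zero => simp
  | add u v hu hv =>
    rw [map_add, map_add, mul_add, map_add, map_add, map_add, hu, hv, ← map_add]
  | tmul p q => simp [mul_comm, mul_smul_comm, LinearMap.mul_apply']

lemma LT2' (g f : A →ₗ[k] k) (x : A) (u : A ⊗[k] A) :
    f ((TensorProduct.lid k A) (map g LinearMap.id u) * x)
      = g ((TensorProduct.rid k A) ((f ∘ₗ (LinearMap.mul k A).flip x).lTensor A u)) := by
  induction u using TensorProduct.induction_on with
  | zero => simp
  | add u v hu hv =>
    rw [map_add, map_add, add_mul, map_add, map_add, map_add, hu, hv, ← map_add]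
  | tmul p q => simp [mul_comm, smul_mul_assoc]

lemma Pd_counit : Pd (counit : A →ₗ[k] k) = LinearMap.id := by
  apply LinearMap.ext; intro y
  rw [Pd_apply, Coalgebra.lTensor_counit_comul]
  simp

lemma trace_eq_sum_coord {ι : Type*} [Fintype ι] (b : Module.Basis ι k A) (F : A →ₗ[k] A) :
    LinearMap.trace k A F = ∑ i, b.coord i (F (b i)) := by
  classical
  rw [LinearMap.trace_eq_matrix_trace k b, Matrix.trace]
  refine Finset.sum_congr rfl ?_
  intro i _
  simp [Matrix.diag, LinearMap.toMatrix_apply, Module.Basis.coord_apply]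

theorem core_integral {k A : Type*} [Field k] [Ring A] [Bialgebra k A]
    [FiniteDimensional k A]
    (S : A →ₗ[k] A)
    (hSl : ∀ x : A, mul' k A (S.rTensor A (comul x)) = counit (R := k) x • 1)
    (hSr : ∀ x : A, mul' k A (S.lTensor A (comul x)) = counit (R := k) x • 1)
    (hSS : ∀ x : A, S (S x) = x)
    (hdim : (Module.finrank k A : k) ≠ 0)
    {ι : Type*} [Fintype ι] (b : Module.Basis ι k A) (C : A)
    (hC : C = ∑ i, (TensorProduct.lid k A)
      (TensorProduct.map (b.coord i) LinearMap.id (comul (b i)))) :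
    C ≠ 0 ∧ (∀ x, x * C = counit (R := k) x • C) ∧ (∀ x, C * x = counit (R := k) x • C)
      ∧ S C = C ∧ counit (R := k) C = (Module.finrank k A : k)
      ∧ LinearMap.trace k A (LinearMap.mulRight k C) = (Module.finrank k A : k) := by
  have f_C : ∀ f : A →ₗ[k] k, f C = LinearMap.trace k A (Pd f) := by
    intro f
    rw [hC, map_sum, trace_eq_sum_coord b]
    exact Finset.sum_congr rfl fun i _ => LT0 (b.coord i) f (comul (b i))
  have f_xC : ∀ (f : A →ₗ[k] k) (x : A),
      f (x * C) = LinearMap.trace k A (Pd (f ∘ₗ LinearMap.mul k A x)) := by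
    intro f x
    rw [hC, Finset.mul_sum, map_sum, trace_eq_sum_coord b]
    exact Finset.sum_congr rfl fun i _ => LT2 (b.coord i) f x (comul (b i))
  have f_Cx : ∀ (f : A →ₗ[k] k) (x : A),
      f (C * x) = LinearMap.trace k A (Pd (f ∘ₗ (LinearMap.mul k A).flip x)) := by
    intro f x
    rw [hC, Finset.sum_mul, map_sum, trace_eq_sum_coord b]
    exact Finset.sum_congr rfl fun i _ => LT2' (b.coord i) f x (comul (b i))
  have hl : ∀ x, x * C = counit (R := k) x • C := by
    intro x
    have hdual : ∀ f : Module.Dual k A, f (x * C - counit (R := k) x • C) = 0 := by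
      intro f
      rw [map_sub, map_smul, f_xC f x, keyxC S hSl hSr hSS f x, f_C f, smul_eq_mul, sub_self]
    have := (Module.forall_dual_apply_eq_zero_iff k _).mp hdual
    exact sub_eq_zero.mp this
  have hr : ∀ x, C * x = counit (R := k) x • C := by
    intro x
    have hdual : ∀ f : Module.Dual k A, f (C * x - counit (R := k) x • C) = 0 := by
      intro f
      rw [map_sub, map_smul, f_Cx f x, keyCx S hSl hSr hSS f x, f_C f, smul_eq_mul, sub_self]
    have := (Module.forall_dual_apply_eq_zero_iff k _).mp hdual
    exact sub_eq_zero.mp this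
  have hεC : counit (R := k) C = (Module.finrank k A : k) := by
    rw [f_C counit, Pd_counit, LinearMap.trace_id]
  have hC0 : C ≠ 0 := by
    intro h
    rw [h, map_zero] at hεC
    exact hdim hεC.symm
  have hSC : S C = C := by
    have h1 : C * S C = counit (R := k) C • C := by
      rw [hr (S C), counit_S S hSl]
    have h2 : C * S C = counit (R := k) C • S C := by
      calc C * S C = S (S C) * S C := by rw [hSS]
        _ = S (C * S C) := (S_mul S hSl hSr _ _).symm
        _ = S (counit (R := k) (S C) • C) := by rw [hr (S C)]
        _ = counit (R := k) C • S C := by rw [map_smul, counit_S S hSl]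
    have h3 : counit (R := k) C • C = counit (R := k) C • S C := h1 ▸ h2
    rw [hεC] at h3
    exact (smul_right_injective A hdim h3).symm
  have htr : LinearMap.trace k A (LinearMap.mulRight k C) = (Module.finrank k A : k) := by
    rw [trace_eq_sum_coord b]
    have step : ∀ i, b.coord i (LinearMap.mulRight k C (b i))
        = b.coord i C * counit (R := k) (b i) := by
      intro i
      rw [LinearMap.mulRight_apply, hl (b i), map_smul, smul_eq_mul, mul_comm]
    rw [Finset.sum_congr rfl fun i _ => step i]
    have : counit (R := k) C = ∑ i, b.coord i C * counit (R := k) (b i) := by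
      conv_lhs => rw [← Module.Basis.sum_repr b C]
      rw [map_sum]
      exact Finset.sum_congr rfl fun i _ => by
        rw [map_smul, smul_eq_mul, Module.Basis.coord_apply]
    rw [← this, hεC]
  exact ⟨hC0, hl, hr, hSC, hεC, htr⟩

end HopfAux


/-- For a finite type involutory Hopf `π`-coalgebra `H` with `dim H 1 ≠ 0` in `k`, the element
`C = ∑_{i,k} δ_i^{i,k} e_k ∈ H 1` (partial trace on the first factor of the comultiplication
`Δ_{1,1}`, computed in any basis `(e_i)` of `H 1`) is a non-zero two-sided integral for the
Hopf algebra `H 1`, with `S_1 C = C` and `ε C = T_1 C = dim H 1`. -/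
theorem distinguished_integral (k : Type*) [Field k] (π : Type*) [Group π]
    (H : π → Type*) [∀ α, Ring (H α)] [∀ α, Algebra k (H α)]
    [∀ α, FiniteDimensional k (H α)]
    (Hc : HopfGroupCoalgebra k π H)
    (hinv : ∀ (α : π) (x : H α), Lcast k H (inv_inv α) (Hc.S α⁻¹ (Hc.S α x)) = x)
    (hdim : (Module.finrank k (H (1 : π)) : k) ≠ 0)
    (ι : Type*) [Fintype ι] (b : Module.Basis ι k (H (1 : π)))
    (C : H (1 : π))
    (hC : C = ∑ i : ι, (TensorProduct.lid k (H (1 : π)))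
      (TensorProduct.map (b.coord i) LinearMap.id
        (Hc.Δ 1 1 (Lcast k H (one_mul (1 : π)).symm (b i))))) :
    C ≠ 0 ∧
    (∀ x : H (1 : π), x * C = Hc.ε x • C) ∧
    (∀ x : H (1 : π), C * x = Hc.ε x • C) ∧
    Lcast k H inv_one (Hc.S 1 C) = C ∧
    Hc.ε C = (Module.finrank k (H (1 : π)) : k) ∧
    LinearMap.trace k (H (1 : π)) (LinearMap.mulRight k C) =
      (Module.finrank k (H (1 : π)) : k) := by
  have s : (1 : π) = 1 * 1 := (one_mul 1).symm
  let δA : (H (1 : π)) →ₗ[k] (H (1 : π)) ⊗[k] (H (1 : π)) := (Hc.Δ 1 1).toLinearMap ∘ₗ Lcast k H s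
  have mapsplitL : ∀ v : (H (1 : π)) ⊗[k] (H (1 : π)),
      TensorProduct.map δA LinearMap.id v
        = TensorProduct.map (Hc.Δ 1 1).toLinearMap LinearMap.id
            (TensorProduct.map (Lcast k H s) LinearMap.id v) := by
    intro v
    rw [← LinearMap.comp_apply, ← TensorProduct.map_comp]
    rfl
  have mapsplitR : ∀ v : (H (1 : π)) ⊗[k] (H (1 : π)),
      TensorProduct.map LinearMap.id δA v
        = TensorProduct.map LinearMap.id (Hc.Δ 1 1).toLinearMap
            (TensorProduct.map LinearMap.id (Lcast k H s) v) := by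
    intro v
    rw [← LinearMap.comp_apply, ← TensorProduct.map_comp]
    rfl
  -- coassociativity
  have hco : (TensorProduct.assoc k (H (1 : π)) (H (1 : π)) (H (1 : π))).toLinearMap ∘ₗ δA.rTensor (H (1 : π)) ∘ₗ δA
      = δA.lTensor (H (1 : π)) ∘ₗ δA := by
    apply LinearMap.ext; intro y
    have h0 := Hc.coassoc 1 1 1
      (Lcast k H (by simp : (1 : π) * 1 = 1 * 1 * 1) (Lcast k H s y))
    rw [Delta_cast_left Hc s (Lcast k H s y)] at h0
    rw [Lcast_Lcast, Delta_cast_right Hc s (Lcast k H s y)] at h0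
    simp only [LinearMap.coe_comp, Function.comp_apply, LinearEquiv.coe_coe]
    rw [show δA.rTensor (H (1 : π)) = TensorProduct.map δA LinearMap.id from rfl,
      show δA.lTensor (H (1 : π)) = TensorProduct.map LinearMap.id δA from rfl,
      mapsplitL, mapsplitR]
    exact h0
  -- counit laws
  have hεr : (Hc.ε.toLinearMap).rTensor (H (1 : π)) ∘ₗ δA = TensorProduct.mk k k (H (1 : π)) 1 := by
    apply LinearMap.ext; intro y
    have h0 := Hc.counit_left 1 (Lcast k H s y)
    rw [Lcast_Lcast, Lcast_refl] at h0
    simp only [LinearMap.id_coe, id_eq] at h0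
    have h1 : TensorProduct.map Hc.ε.toLinearMap LinearMap.id (δA y)
        = (TensorProduct.lid k (H (1 : π))).symm y := by
      conv_rhs => rw [← h0]
      exact ((TensorProduct.lid k (H (1 : π))).symm_apply_apply _).symm
    simp only [LinearMap.coe_comp, Function.comp_apply]
    rw [show (Hc.ε.toLinearMap).rTensor (H (1 : π))
        = TensorProduct.map Hc.ε.toLinearMap LinearMap.id from rfl, h1,
      TensorProduct.lid_symm_apply]
    rfl
  have hεl : (Hc.ε.toLinearMap).lTensor (H (1 : π)) ∘ₗ δA = (TensorProduct.mk k (H (1 : π)) k).flip 1 := by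
    apply LinearMap.ext; intro y
    have h0 := Hc.counit_right 1 (Lcast k H s y)
    rw [Lcast_Lcast, Lcast_refl] at h0
    simp only [LinearMap.id_coe, id_eq] at h0
    have h1 : TensorProduct.map LinearMap.id Hc.ε.toLinearMap (δA y)
        = (TensorProduct.rid k (H (1 : π))).symm y := by
      conv_rhs => rw [← h0]
      exact ((TensorProduct.rid k (H (1 : π))).symm_apply_apply _).symm
    simp only [LinearMap.coe_comp, Function.comp_apply]
    rw [show (Hc.ε.toLinearMap).lTensor (H (1 : π))
        = TensorProduct.map LinearMap.id Hc.ε.toLinearMap from rfl, h1,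
      TensorProduct.rid_symm_apply]
    rfl
  letI instCo : Coalgebra k (H (1 : π)) :=
    { comul := δA
      counit := Hc.ε.toLinearMap
      coassoc := hco
      rTensor_counit_comp_comul := hεr
      lTensor_counit_comp_comul := hεl }
  have hδone : δA 1 = 1 := by
    show (Hc.Δ 1 1) (Lcast k H s 1) = 1
    rw [Lcast_one, map_one]
  have hδmul : ∀ a b : (H (1 : π)), δA (a * b) = δA a * δA b := by
    intro a b
    show (Hc.Δ 1 1) (Lcast k H s (a * b)) = _
    rw [Lcast_mul, map_mul]
    rfl
  letI instBi : Bialgebra k (H (1 : π)) :=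
    Bialgebra.mk' k (H (1 : π)) (map_one Hc.ε) (fun {a b} => map_mul Hc.ε a b)
      hδone (fun {a b} => hδmul a b)
  -- the antipode
  let S₀ : (H (1 : π)) →ₗ[k] (H (1 : π)) := Lcast k H inv_one ∘ₗ Hc.S 1
  have comp_eq : (Lcast k H (inv_inv (1:π))).comp (Hc.S 1⁻¹) ∘ₗ Lcast k H inv_one.symm
      = S₀ := by
    apply LinearMap.ext; intro z
    simp only [LinearMap.coe_comp, Function.comp_apply]
    rw [S_cast Hc inv_one.symm z, Lcast_Lcast]
    rfl
  have hSl : ∀ x : (H (1 : π)),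
      LinearMap.mul' k (H (1 : π)) (S₀.rTensor (H (1 : π)) (Coalgebra.comul x))
        = Coalgebra.counit (R := k) x • (1 : (H (1 : π))) := by
    intro y
    have h0 := Hc.antipode_left 1
      (Lcast k H (by simp : (1 : π) * 1 = 1⁻¹ * 1) (Lcast k H s y))
    rw [Delta_cast_left Hc (inv_one.symm : (1:π) = 1⁻¹) (Lcast k H s y)] at h0
    rw [Lcast_Lcast, Lcast_Lcast, Lcast_refl] at h0
    have fold : TensorProduct.map ((Lcast k H (inv_inv (1:π))).comp (Hc.S 1⁻¹)) LinearMap.id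
          (TensorProduct.map (Lcast k H inv_one.symm) LinearMap.id
            (Hc.Δ 1 1 (Lcast k H s y)))
        = TensorProduct.map S₀ LinearMap.id (Hc.Δ 1 1 (Lcast k H s y)) := by
      rw [← LinearMap.comp_apply, ← TensorProduct.map_comp, comp_eq]
      rfl
    rw [fold] at h0
    exact h0
  have hSr : ∀ x : (H (1 : π)),
      LinearMap.mul' k (H (1 : π)) (S₀.lTensor (H (1 : π)) (Coalgebra.comul x))
        = Coalgebra.counit (R := k) x • (1 : (H (1 : π))) := by
    intro y
    have h0 := Hc.antipode_right 1
      (Lcast k H (by simp : (1 : π) * 1 = 1 * 1⁻¹) (Lcast k H s y))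
    rw [Delta_cast_right Hc (inv_one.symm : (1:π) = 1⁻¹) (Lcast k H s y)] at h0
    rw [Lcast_Lcast, Lcast_Lcast, Lcast_refl] at h0
    have fold : TensorProduct.map LinearMap.id ((Lcast k H (inv_inv (1:π))).comp (Hc.S 1⁻¹))
          (TensorProduct.map LinearMap.id (Lcast k H inv_one.symm)
            (Hc.Δ 1 1 (Lcast k H s y)))
        = TensorProduct.map LinearMap.id S₀ (Hc.Δ 1 1 (Lcast k H s y)) := by
      rw [← LinearMap.comp_apply, ← TensorProduct.map_comp, comp_eq]
      rfl
    rw [fold] at h0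
    exact h0
  have hSS : ∀ x : (H (1 : π)), S₀ (S₀ x) = x := by
    intro x
    show Lcast k H inv_one (Hc.S 1 (Lcast k H inv_one (Hc.S 1 x))) = x
    rw [S_cast Hc inv_one (Hc.S 1 x), Lcast_Lcast]
    exact hinv 1 x
  obtain ⟨h1, h2, h3, h4, h5, h6⟩ :=
    HopfAux.core_integral S₀ hSl hSr hSS hdim b C hC
  exact ⟨h1, h2, h3, h4, h5, h6⟩
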